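/- Let G be a simple graph with vertex set A and let D ⊆ A be a set of 'active' vertices such that any two distinct active vertices are adjacent in G. Suppose every cycle of G of length at most ℓ consists entirely of active vertices (G is ℓ-quasi-acyclic with respect to D). Let a_0, ..., a_{ℓ-1} be a closed walk in G of length ℓ (with a_ℓ = a_0), and suppose for some index i with 0 ≤ i < ℓ that a_0, ..., a_i are all active but a_{i+1} is passive (not in D). Let j be the smallest index with i < j < ℓ such that a_{j+1} is active. Then a_{i+1} = a_j and a_{j+1} = a_i. -/

import Mathlib

variable {V : Type*}

/-- `a 0, …, a ℓ` is a walk in `G`: consecutive vertices adjacent (hence distinct). -/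
def IsWalk (G : SimpleGraph V) (a : ℕ → V) (ℓ : ℕ) : Prop :=
  ∀ i, i < ℓ → G.Adj (a i) (a (i + 1))

/-- `a 0, …, a (ℓ-1)` is a closed walk (tour) of length `ℓ` in `G`. -/
def IsTour (G : SimpleGraph V) (a : ℕ → V) (ℓ : ℕ) : Prop :=
  ∀ i, i < ℓ → G.Adj (a i) (a ((i + 1) % ℓ))

/-- A cycle (closed walk of length ≥ 3 with pairwise distinct vertices) all of whose
edges satisfy the edge relation `R`. -/
def IsCycleOn (R : V → V → Prop) (c : ℕ → V) (n : ℕ) : Prop :=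
  3 ≤ n ∧ (∀ i, i < n → ∀ j, j < n → c i = c j → i = j) ∧
    ∀ i, i < n → R (c i) (c ((i + 1) % n))

/-- Edge relation of the locus of the closed walk `a 0, …, a (ℓ-1)`. -/
def tourEdge (a : ℕ → V) (ℓ : ℕ) (u v : V) : Prop :=
  ∃ i, i < ℓ ∧ ((a i = u ∧ a ((i + 1) % ℓ) = v) ∨ (a i = v ∧ a ((i + 1) % ℓ) = u))

/-- Edge relation of the locus of the (open) walk `a 0, …, a ℓ`. -/
def walkEdge (a : ℕ → V) (ℓ : ℕ) (u v : V) : Prop :=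
  ∃ i, i < ℓ ∧ ((a i = u ∧ a (i + 1) = v) ∨ (a i = v ∧ a (i + 1) = u))

/-- The locus of the closed walk `a 0, …, a (ℓ-1)` contains no cycle. -/
def TourAcyclic (a : ℕ → V) (ℓ : ℕ) : Prop :=
  ¬ ∃ (c : ℕ → V) (n : ℕ), IsCycleOn (tourEdge a ℓ) c n

/-- The locus of the walk `a 0, …, a ℓ` contains no cycle. -/
def WalkAcyclic (a : ℕ → V) (ℓ : ℕ) : Prop :=
  ¬ ∃ (c : ℕ → V) (n : ℕ), IsCycleOn (walkEdge a ℓ) c n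

/-- Every cycle of `G` of length at most `ℓ` lies entirely within `D`. -/
def QuasiAcyclic (G : SimpleGraph V) (D : Set V) (ℓ : ℕ) : Prop :=
  ∀ (c : ℕ → V) (n : ℕ), n ≤ ℓ → IsCycleOn G.Adj c n → ∀ i, i < n → c i ∈ D

/-- Any two distinct vertices of `D` are adjacent. -/
def TotallyConnected (G : SimpleGraph V) (D : Set V) : Prop :=
  ∀ x ∈ D, ∀ y ∈ D, x ≠ y → G.Adj x y

section Aux

open SimpleGraph Walk

variable {G : SimpleGraph V}

lemma aux_support_getElem : ∀ {u v : V} (p : G.Walk u v) (k : ℕ)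
    (hk : k < p.support.length), p.support[k] = p.getVert k := by
  intro u v p
  induction p with
  | nil =>
    intro k hk
    simp only [Walk.support_nil] at hk ⊢
    have hk0 : k = 0 := by simpa using Nat.lt_one_iff.mp (by simpa using hk)
    subst hk0; rfl
  | cons h q ih =>
    intro k hk
    cases k with
    | zero => simp [Walk.support_cons, Walk.getVert_zero]
    | succ m =>
      simp only [Walk.support_cons] at hk ⊢
      simp only [List.getElem_cons_succ]
      rw [ih m (by simpa using Nat.lt_of_succ_lt_succ hk)]
      rfl

lemma aux_cycle_getVert_inj {v : V} {p : G.Walk v v} (hp : p.IsCycle)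
    {x y : ℕ} (hx : x < p.length) (hy : y < p.length)
    (h : p.getVert x = p.getVert y) : x = y := by
  have htail : p.support.tail.Nodup := hp.2
  have hlen : p.support.length = p.length + 1 := p.length_support
  have htl : p.support.tail.length = p.length := by
    rw [List.length_tail, hlen]; omega
  -- injectivity on [1, p.length]
  have key : ∀ x y : ℕ, 1 ≤ x → x ≤ p.length → 1 ≤ y → y ≤ p.length →
      p.getVert x = p.getVert y → x = y := by
    intro x y h1x hxl h1y hyl heq
    have hx' : x - 1 < p.support.tail.length := by omega
    have hy' : y - 1 < p.support.tail.length := by omega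
    have e1 : p.support.tail[x - 1] = p.getVert x := by
      rw [List.getElem_tail]
      rw [aux_support_getElem p (x - 1 + 1) (by omega)]
      congr 1; omega
    have e2 : p.support.tail[y - 1] = p.getVert y := by
      rw [List.getElem_tail]
      rw [aux_support_getElem p (y - 1 + 1) (by omega)]
      congr 1; omega
    have := List.Nodup.getElem_inj_iff htail (i := x - 1) (j := y - 1)
      (hi := hx') (hj := hy')
    rw [e1, e2] at this
    have := this.mp heq
    omega
  rcases Nat.eq_zero_or_pos x with rfl | hx1
  · rcases Nat.eq_zero_or_pos y with rfl | hy1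
    · rfl
    · exfalso
      have h0 : p.getVert p.length = p.getVert y := by
        rw [p.getVert_length, ← h, p.getVert_zero]
      have h3 := hp.three_le_length
      have := key p.length y (by omega) le_rfl hy1 (by omega) h0
      omega
  · rcases Nat.eq_zero_or_pos y with rfl | hy1
    · exfalso
      have h0 : p.getVert x = p.getVert p.length := by
        rw [p.getVert_length, h, p.getVert_zero]
      have h3 := hp.three_le_length
      have := key x p.length hx1 (by omega) (by omega) le_rfl h0
      omega
    · exact key x y hx1 (by omega) hy1 (by omega) h

lemma aux_cycle_isCycleOn {v : V} {p : G.Walk v v} (hp : p.IsCycle) :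
    IsCycleOn G.Adj p.getVert p.length := by
  refine ⟨hp.three_le_length, fun x hx y hy h => aux_cycle_getVert_inj hp hx hy h, ?_⟩
  intro x hx
  rcases Nat.lt_or_ge (x + 1) p.length with h1 | h1
  · rw [Nat.mod_eq_of_lt h1]
    exact p.adj_getVert_succ hx
  · have hx1 : x + 1 = p.length := by omega
    have hmod : (x + 1) % p.length = 0 := by rw [hx1, Nat.mod_self]
    have hadj := p.adj_getVert_succ hx
    rw [hx1, p.getVert_length] at hadj
    rw [hmod, p.getVert_zero]
    exact hadj

/-- Build a walk along a segment of the sequence `a`. -/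
lemma aux_exists_walk (G : SimpleGraph V) (a : ℕ → V) (s : ℕ) :
    ∀ t, s ≤ t → (∀ k, s ≤ k → k < t → G.Adj (a k) (a (k + 1))) →
    ∃ w : G.Walk (a s) (a t), w.length = t - s ∧
      (∀ x ∈ w.support, ∃ k, s ≤ k ∧ k ≤ t ∧ a k = x) ∧
      (∀ e ∈ w.edges, ∃ k, s ≤ k ∧ k < t ∧ e = s(a k, a (k + 1))) := by
  intro t hst
  induction t, hst using Nat.le_induction with
  | base =>
    intro _
    refine ⟨Walk.nil, by simp, ?_, by simp⟩
    intro x hx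
    simp only [Walk.support_nil, List.mem_singleton] at hx
    exact ⟨s, le_rfl, le_rfl, hx.symm⟩
  | succ t hst ih =>
    intro hadj
    obtain ⟨w, hwl, hws, hwe⟩ := ih (fun k hk hk' => hadj k hk (by omega))
    refine ⟨w.concat (hadj t hst (by omega)), ?_, ?_, ?_⟩
    · rw [Walk.length_concat, hwl]; omega
    · intro x hx
      rw [Walk.support_concat, List.mem_append] at hx
      rcases hx with hx | hx
      · obtain ⟨k, h1, h2, h3⟩ := hws x hx
        exact ⟨k, h1, by omega, h3⟩
      · simp at hx
        exact ⟨t + 1, by omega, le_rfl, hx.symm⟩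
    · intro e he
      rw [Walk.edges_concat, List.concat_eq_append, List.mem_append] at he
      rcases he with he | he
      · obtain ⟨k, h1, h2, h3⟩ := hwe e he
        exact ⟨k, h1, by omega, h3⟩
      · simp at he
        exact ⟨t, hst, by omega, he⟩

end Aux

/-- **Exiting the database means re-entering at the same point** (Lemma 3.3).  In an
ℓ-quasi-acyclic graph with totally connected active set `D`, if a closed walk of length
ℓ has `a 0, …, a i` active and `a (i+1)` passive, and `j` is the least index in
`(i, ℓ)` with `a (j+1)` active, then `a (i+1) = a j` and `a (j+1) = a i`. -/
theorem enter_exit (G : SimpleGraph V) (D : Set V) (ℓ : ℕ)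
    (htc : TotallyConnected G D) (hqa : QuasiAcyclic G D ℓ)
    (a : ℕ → V) (ht : IsTour G a ℓ)
    (i : ℕ) (hiℓ : i < ℓ) (hact : ∀ k, k ≤ i → a k ∈ D) (hpass : a (i + 1) ∉ D)
    (j : ℕ) (hij : i < j) (hjℓ : j < ℓ) (hj : a ((j + 1) % ℓ) ∈ D)
    (hjmin : ∀ k, i < k → k < ℓ → a ((k + 1) % ℓ) ∈ D → j ≤ k) :
    a (i + 1) = a j ∧ a ((j + 1) % ℓ) = a i := by
  classical
  -- all vertices strictly between i and j (inclusive of j) are passive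
  have hpassk : ∀ k, i < k → k ≤ j → a k ∉ D := by
    intro k hik hkj hkD
    rcases Nat.lt_or_ge k (i + 2) with hk2 | hk2
    · have : k = i + 1 := by omega
      rw [this] at hkD; exact hpass hkD
    · have hkℓ : k < ℓ := by omega
      have hmod : (k - 1 + 1) % ℓ = k := by
        rw [Nat.sub_add_cancel (by omega)]
        exact Nat.mod_eq_of_lt hkℓ
      have := hjmin (k - 1) (by omega) (by omega) (by rw [hmod]; exact hkD)
      omega
  -- adjacency of consecutive tour vertices with small index
  have hAdjSeg : ∀ k, k < j → G.Adj (a k) (a (k + 1)) := by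
    intro k hk
    have hk' : k < ℓ := by omega
    have := ht k hk'
    rwa [Nat.mod_eq_of_lt (by omega)] at this
  have hAdjJ : G.Adj (a j) (a ((j + 1) % ℓ)) := ht j hjℓ
  have haiD : a i ∈ D := hact i le_rfl
  -- Step 1 : a ((j+1) % ℓ) = a i
  have step1 : a ((j + 1) % ℓ) = a i := by
    by_contra hne
    have hbne : a i ≠ a ((j + 1) % ℓ) := fun h => hne h.symm
    have hAdjIB : G.Adj (a i) (a ((j + 1) % ℓ)) := htc _ haiD _ hj hbne
    -- length bound
    have hle : j - i + 2 ≤ ℓ := by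
      by_contra h'
      have h1 : i = 0 ∧ j + 1 = ℓ := by omega
      have : (j + 1) % ℓ = 0 := by rw [h1.2, Nat.mod_self]
      rw [this, ← h1.1] at hne
      exact hne rfl
    obtain ⟨w, hwl, hws, hwe⟩ := aux_exists_walk G a i j (by omega)
      (fun k hk hk' => hAdjSeg k hk')
    set P := w.concat hAdjJ with hP
    have hPs : ∀ x ∈ P.support, (∃ k, i ≤ k ∧ k ≤ j ∧ a k = x) ∨ x = a ((j + 1) % ℓ) := by
      intro x hx
      rw [hP, SimpleGraph.Walk.support_concat,
        List.mem_append] at hx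
      rcases hx with hx | hx
      · exact Or.inl (hws x hx)
      · simp at hx; exact Or.inr hx
    have hPe : ∀ e ∈ P.edges, ∃ k, i ≤ k ∧ k < j + 1 ∧
        e = s(a k, a (if k = j then (j + 1) % ℓ else k + 1)) := by
      intro e he
      rw [hP, SimpleGraph.Walk.edges_concat, List.concat_eq_append,
        List.mem_append] at he
      rcases he with he | he
      · obtain ⟨k, h1, h2, h3⟩ := hwe e he
        refine ⟨k, h1, by omega, ?_⟩
        rw [if_neg (by omega)]; exact h3
      · simp at he
        exact ⟨j, by omega, by omega, by rw [if_pos rfl]; exact he⟩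
    set Q := P.bypass with hQ
    have hQpath : Q.IsPath := P.bypass_isPath
    have hedge : s(a ((j + 1) % ℓ), a i) ∉ Q.edges := by
      intro he
      obtain ⟨k, h1, h2, h3⟩ := hPe _ (P.edges_bypass_subset he)
      by_cases hkj : k = j
      · subst hkj
        rw [if_pos rfl, Sym2.eq_iff] at h3
        rcases h3 with ⟨h3, h4⟩ | ⟨h3, h4⟩
        · exact hpassk k hij le_rfl (by rw [← h3]; exact hj)
        · exact hpassk k hij le_rfl (by rw [← h4]; exact haiD)
      · rw [if_neg hkj, Sym2.eq_iff] at h3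
        rcases h3 with ⟨h3, h4⟩ | ⟨h3, h4⟩
        · exact hpassk (k + 1) (by omega) (by omega) (by rw [← h4]; exact haiD)
        · exact hpassk (k + 1) (by omega) (by omega) (by rw [← h3]; exact hj)
    set C := SimpleGraph.Walk.cons hAdjIB.symm Q with hC
    have hcyc : C.IsCycle :=
      (SimpleGraph.Walk.cons_isCycle_iff Q hAdjIB.symm).mpr ⟨hQpath, hedge⟩
    have hClen : C.length ≤ ℓ := by
      have h1 : Q.length ≤ P.length := P.length_bypass_le
      have h2 : P.length = (j - i) + 1 := by
        rw [hP, SimpleGraph.Walk.length_concat, hwl]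
      have : C.length = Q.length + 1 := by rw [hC, SimpleGraph.Walk.length_cons]
      omega
    have hall := hqa C.getVert C.length hClen (aux_cycle_isCycleOn hcyc)
    have hCs : ∀ x ∈ C.support, (∃ k, i ≤ k ∧ k ≤ j ∧ a k = x) ∨ x = a ((j + 1) % ℓ) := by
      intro x hx
      rw [hC, SimpleGraph.Walk.support_cons, List.mem_cons] at hx
      rcases hx with hx | hx
      · exact Or.inr hx
      · exact hPs x (P.support_bypass_subset hx)
    -- each cycle vertex is in D hence equals a i or a ((j+1)%ℓ)
    have hvert : ∀ k, k < C.length →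
        C.getVert k = a i ∨ C.getVert k = a ((j + 1) % ℓ) := by
      intro k hk
      have hmem : C.getVert k ∈ C.support :=
        SimpleGraph.Walk.mem_support_iff_exists_getVert.mpr ⟨k, rfl, by omega⟩
      have hD := hall k hk
      rcases hCs _ hmem with ⟨m, hm1, hm2, hm3⟩ | hx
      · rcases Nat.eq_or_lt_of_le hm1 with rfl | hm1'
        · exact Or.inl hm3.symm
        · exact absurd (hm3 ▸ hD) (hpassk m hm1' hm2)
      · exact Or.inr hx
    have h3 := hcyc.three_le_length
    have hinj : ∀ x, x < C.length → ∀ y, y < C.length →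
        C.getVert x = C.getVert y → x = y :=
      fun x hx y hy h => aux_cycle_getVert_inj hcyc hx hy h
    have h0 := hvert 0 (by omega)
    have h1 := hvert 1 (by omega)
    have h2 := hvert 2 (by omega)
    rcases h0 with h0 | h0 <;> rcases h1 with h1 | h1 <;> rcases h2 with h2 | h2
    · exact absurd (hinj 0 (by omega) 1 (by omega) (h0.trans h1.symm)) (by omega)
    · exact absurd (hinj 0 (by omega) 1 (by omega) (h0.trans h1.symm)) (by omega)
    · exact absurd (hinj 0 (by omega) 2 (by omega) (h0.trans h2.symm)) (by omega)
    · exact absurd (hinj 1 (by omega) 2 (by omega) (h1.trans h2.symm)) (by omega)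
    · exact absurd (hinj 1 (by omega) 2 (by omega) (h1.trans h2.symm)) (by omega)
    · exact absurd (hinj 0 (by omega) 2 (by omega) (h0.trans h2.symm)) (by omega)
    · exact absurd (hinj 0 (by omega) 1 (by omega) (h0.trans h1.symm)) (by omega)
    · exact absurd (hinj 0 (by omega) 1 (by omega) (h0.trans h1.symm)) (by omega)
  refine ⟨?_, step1⟩
  -- Step 2 : a (i+1) = a j
  rcases Nat.eq_or_lt_of_le (Nat.succ_le_of_lt hij) with heq | hlt
  · exact congrArg a heq
  by_contra hne2
  have hAdjJI : G.Adj (a j) (a i) := by rw [← step1]; exact hAdjJ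
  obtain ⟨w, hwl, hws, hwe⟩ := aux_exists_walk G a (i + 1) j (by omega)
    (fun k hk hk' => hAdjSeg k hk')
  set P := SimpleGraph.Walk.cons (hAdjSeg i hij) w with hP
  set Q := P.bypass with hQ
  have hQpath : Q.IsPath := P.bypass_isPath
  have hPe : ∀ e ∈ P.edges, ∃ k, i ≤ k ∧ k < j ∧ e = s(a k, a (k + 1)) := by
    intro e he
    rw [hP, SimpleGraph.Walk.edges_cons, List.mem_cons] at he
    rcases he with he | he
    · exact ⟨i, le_rfl, by omega, he⟩
    · obtain ⟨k, h1, h2, h3⟩ := hwe e he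
      exact ⟨k, by omega, h2, h3⟩
  have hedge : s(a j, a i) ∉ Q.edges := by
    intro he
    obtain ⟨k, h1, h2, h3⟩ := hPe _ (P.edges_bypass_subset he)
    rw [Sym2.eq_iff] at h3
    rcases h3 with ⟨h3, h4⟩ | ⟨h3, h4⟩
    · exact hpassk (k + 1) (by omega) (by omega) (by rw [← h4]; exact haiD)
    · rcases Nat.eq_or_lt_of_le h1 with rfl | h1'
      · exact hne2 h3.symm
      · exact hpassk k h1' (by omega) (by rw [← h4]; exact haiD)
  set C := SimpleGraph.Walk.cons hAdjJI Q with hC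
  have hcyc : C.IsCycle :=
    (SimpleGraph.Walk.cons_isCycle_iff Q hAdjJI).mpr ⟨hQpath, hedge⟩
  have hClen : C.length ≤ ℓ := by
    have h1 : Q.length ≤ P.length := P.length_bypass_le
    have h2 : P.length = (j - (i + 1)) + 1 := by
      rw [hP, SimpleGraph.Walk.length_cons, hwl]
    have : C.length = Q.length + 1 := by rw [hC, SimpleGraph.Walk.length_cons]
    omega
  have hall := hqa C.getVert C.length hClen (aux_cycle_isCycleOn hcyc)
  have hCs : ∀ x ∈ C.support, x = a i ∨ ∃ k, i < k ∧ k ≤ j ∧ a k = x := by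
    intro x hx
    rw [hC, SimpleGraph.Walk.support_cons, List.mem_cons] at hx
    rcases hx with hx | hx
    · exact Or.inr ⟨j, hij, le_rfl, hx.symm⟩
    · have hx' := P.support_bypass_subset hx
      rw [hP, SimpleGraph.Walk.support_cons, List.mem_cons] at hx'
      rcases hx' with hx' | hx'
      · exact Or.inl hx'
      · obtain ⟨k, h1, h2, h3⟩ := hws x hx'
        exact Or.inr ⟨k, by omega, h2, h3⟩
  have hvert : ∀ k, k < C.length → C.getVert k = a i := by
    intro k hk
    have hmem : C.getVert k ∈ C.support :=
      SimpleGraph.Walk.mem_support_iff_exists_getVert.mpr ⟨k, rfl, by omega⟩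
    have hD := hall k hk
    rcases hCs _ hmem with hx | ⟨m, hm1, hm2, hm3⟩
    · exact hx
    · exact absurd (hm3 ▸ hD) (hpassk m hm1 hm2)
  have h3 := hcyc.three_le_length
  have h01 : C.getVert 0 = C.getVert 1 := by
    rw [hvert 0 (by omega), hvert 1 (by omega)]
  exact absurd (aux_cycle_getVert_inj hcyc (by omega) (by omega) h01) (by omega)
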